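/- Let κ = (k_1,...,k_m) and κ' = (l_1,...,l_n) be finite nondecreasing sequences of nonzero integers, let q ∈ ℕ, and let u : {1,...,m} → {1,...,q} and v : {1,...,n} → {1,...,q} be injective maps. Assume that for all z_1,...,z_q in the circle group T, z_{u(1)}^{k_1}···z_{u(m)}^{k_m} = z_{v(1)}^{l_1}···z_{v(n)}^{l_n}. Then m = n, for each integer r the sets {u(i) : k_i = r} and {v(i) : l_i = r} are equal, and hence κ = κ'. If moreover for all i < j ≤ m one has (k_i = k_j ⟹ u(i) < u(j)) and (l_i = l_j ⟹ v(i) < v(j)), then u = v. -/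

import Mathlib

open Finset in
private lemma zpow_sum_aux {G : Type*} [CommGroup G] (w : G) {ι : Type*} (s : Finset ι)
    (f : ι → ℤ) : w ^ (∑ i ∈ s, f i) = ∏ i ∈ s, w ^ f i := by
  induction s using Finset.cons_induction with
  | empty => simp
  | cons i s hi ih => rw [Finset.sum_cons, Finset.prod_cons, zpow_add, ih]

private lemma circle_exp_one_zpow (c : ℤ) : Circle.exp 1 ^ c = Circle.exp c := by
  have := map_zsmul Circle.expHom c (1 : ℝ)
  simpa [zsmul_eq_mul, ← ofMul_zpow] using this.symm

private lemma circle_zpow_inj {A B : ℤ} (h : ∀ w : Circle, w ^ A = w ^ B) : A = B := by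
  have h1 := h (Circle.exp 1)
  rw [circle_exp_one_zpow, circle_exp_one_zpow, Circle.exp_eq_exp] at h1
  obtain ⟨c, hc⟩ := h1
  rcases eq_or_ne c 0 with rfl | hc0
  · have : (A : ℝ) = (B : ℝ) := by push_cast at hc; linarith
    exact_mod_cast this
  · exfalso
    have h2c : ((2 * c : ℤ) : ℝ) ≠ 0 := by exact_mod_cast mul_ne_zero two_ne_zero hc0
    have hπ : Real.pi = ((A - B : ℤ) : ℝ) / ((2 * c : ℤ) : ℝ) := by
      rw [eq_div_iff h2c]
      push_cast
      linarith
    have hirr : Irrational (((A - B : ℤ) : ℝ) / ((2 * c : ℤ) : ℝ)) := hπ ▸ irrational_pi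
    rw [show (((A - B : ℤ) : ℝ) / ((2 * c : ℤ) : ℝ)) = (((A - B : ℤ) / (2 * c : ℤ) : ℚ) : ℝ)
      by push_cast; ring] at hirr
    exact (Rat.not_irrational _) hirr

theorem statement12
    (m n q : ℕ) (k : Fin m → ℤ) (l : Fin n → ℤ)
    (hkmono : Monotone k) (hlmono : Monotone l)
    (hk0 : ∀ i, k i ≠ 0) (hl0 : ∀ i, l i ≠ 0)
    (u : Fin m → Fin q) (v : Fin n → Fin q)
    (hu : Function.Injective u) (hv : Function.Injective v)
    (heq : ∀ z : Fin q → Circle, ∏ i, z (u i) ^ k i = ∏ i, z (v i) ^ l i) :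
    ∃ h : m = n,
      -- for each integer `r`, `{u i : k i = r} = {v i : l i = r}`
      (∀ r : ℤ, u '' { i | k i = r } = v '' { i | l i = r }) ∧
      -- hence `κ = κ'`
      (∀ i : Fin m, k i = l (Fin.cast h i)) ∧
      -- under the additional monotonicity assumptions, `u = v`
      ((∀ i j : Fin m, i < j → k i = k j → u i < u j) →
        (∀ i j : Fin n, i < j → l i = l j → v i < v j) →
        ∀ i : Fin m, u i = v (Fin.cast h i)) := by
  classical
  set a : Fin q → ℤ := fun p => ∑ i, if u i = p then k i else 0 with ha
  set b : Fin q → ℤ := fun p => ∑ j, if v j = p then l j else 0 with hb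
  have hab : ∀ p, a p = b p := by
    intro p
    apply circle_zpow_inj
    intro w
    have h := heq (fun x => if x = p then w else 1)
    rw [ha, hb, zpow_sum_aux, zpow_sum_aux]
    calc (∏ i, w ^ (if u i = p then k i else 0))
        = ∏ i, (if u i = p then w else 1) ^ k i := by
          refine Finset.prod_congr rfl fun i _ => ?_
          split_ifs <;> simp
      _ = ∏ j, (if v j = p then w else 1) ^ l j := h
      _ = ∏ j, w ^ (if v j = p then l j else 0) := by
          refine Finset.prod_congr rfl fun j _ => ?_
          split_ifs <;> simp
  have hau : ∀ i, a (u i) = k i := by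
    intro i
    rw [ha]
    have := Finset.sum_eq_single (s := Finset.univ) (f := fun i' => if u i' = u i then k i' else 0)
      i (fun i' _ hne => if_neg (fun h => hne (hu h))) (fun h => absurd (Finset.mem_univ i) h)
    simpa using this
  have hbv : ∀ j, b (v j) = l j := by
    intro j
    rw [hb]
    have := Finset.sum_eq_single (s := Finset.univ) (f := fun j' => if v j' = v j then l j' else 0)
      j (fun j' _ hne => if_neg (fun h => hne (hv h))) (fun h => absurd (Finset.mem_univ j) h)
    simpa using this
  have hau0 : ∀ p, p ∉ Set.range u → a p = 0 := by
    intro p hp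
    rw [ha]
    refine Finset.sum_eq_zero fun i _ => ?_
    exact if_neg (fun h => hp ⟨i, h⟩)
  have hbv0 : ∀ p, p ∉ Set.range v → b p = 0 := by
    intro p hp
    rw [hb]
    refine Finset.sum_eq_zero fun j _ => ?_
    exact if_neg (fun h => hp ⟨j, h⟩)
  have himu : ∀ r : ℤ, r ≠ 0 → u '' { i | k i = r } = { p | a p = r } := by
    intro r hr
    ext p
    constructor
    · rintro ⟨i, hi, rfl⟩; simpa [hau i] using hi
    · intro hp
      by_cases hmem : p ∈ Set.range u
      · obtain ⟨i, rfl⟩ := hmem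
        exact ⟨i, by simpa [hau i] using hp, rfl⟩
      · exact absurd (hau0 p hmem) (by rw [hp] at *; exact hr)
  have himv : ∀ r : ℤ, r ≠ 0 → v '' { j | l j = r } = { p | b p = r } := by
    intro r hr
    ext p
    constructor
    · rintro ⟨j, hj, rfl⟩; simpa [hbv j] using hj
    · intro hp
      by_cases hmem : p ∈ Set.range v
      · obtain ⟨j, rfl⟩ := hmem
        exact ⟨j, by simpa [hbv j] using hp, rfl⟩
      · exact absurd (hbv0 p hmem) (by rw [hp] at *; exact hr)
  have hsets : ∀ r : ℤ, u '' { i | k i = r } = v '' { j | l j = r } := by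
    intro r
    rcases eq_or_ne r 0 with rfl | hr
    · have h1 : { i : Fin m | k i = 0 } = ∅ := by ext i; simp [hk0 i]
      have h2 : { j : Fin n | l j = 0 } = ∅ := by ext j; simp [hl0 j]
      simp [h1, h2]
    · rw [himu r hr, himv r hr]
      ext p; simp [hab p]
  -- counts of each value coincide
  have hcount : ∀ r : ℤ,
      (Finset.univ.filter (fun i => k i = r)).card
        = (Finset.univ.filter (fun j => l j = r)).card := by
    intro r
    rcases eq_or_ne r 0 with rfl | hr
    · rw [Finset.filter_false_of_mem fun i _ => hk0 i,
        Finset.filter_false_of_mem fun j _ => hl0 j]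
      simp
    · have h1 : (Finset.univ.filter (fun i => k i = r)).image u
          = Finset.univ.filter (fun p => a p = r) := by
        ext p
        simp only [Finset.mem_image, Finset.mem_filter, Finset.mem_univ, true_and]
        constructor
        · rintro ⟨i, hi, rfl⟩; rw [hau i]; exact hi
        · intro hp
          by_cases hmem : p ∈ Set.range u
          · obtain ⟨i, rfl⟩ := hmem
            exact ⟨i, by rw [← hau i]; exact hp, rfl⟩
          · exact absurd (hau0 p hmem) (by rw [hp]; exact hr)
      have h2 : (Finset.univ.filter (fun j => l j = r)).image v
          = Finset.univ.filter (fun p => b p = r) := by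
        ext p
        simp only [Finset.mem_image, Finset.mem_filter, Finset.mem_univ, true_and]
        constructor
        · rintro ⟨j, hj, rfl⟩; rw [hbv j]; exact hj
        · intro hp
          by_cases hmem : p ∈ Set.range v
          · obtain ⟨j, rfl⟩ := hmem
            exact ⟨j, by rw [← hbv j]; exact hp, rfl⟩
          · exact absurd (hbv0 p hmem) (by rw [hp]; exact hr)
      calc (Finset.univ.filter (fun i => k i = r)).card
          = ((Finset.univ.filter (fun i => k i = r)).image u).card :=
            (Finset.card_image_of_injective _ hu).symm
        _ = (Finset.univ.filter (fun p => a p = r)).card := by rw [h1]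
        _ = (Finset.univ.filter (fun p => b p = r)).card := by
            congr 1; ext p; simp [hab p]
        _ = ((Finset.univ.filter (fun j => l j = r)).image v).card := by rw [h2]
        _ = (Finset.univ.filter (fun j => l j = r)).card :=
            Finset.card_image_of_injective _ hv
  have hcnt : ∀ {N : ℕ} (f : Fin N → ℤ) (r : ℤ),
      (List.ofFn f).count r = (Finset.univ.filter (fun i => f i = r)).card := by
    intro N f r
    rw [← Multiset.coe_count, ← Fin.univ_val_map, Multiset.count_map]
    rw [Finset.card, Finset.filter_val]
    congr 1
    exact Multiset.filter_congr (fun x _ => eq_comm)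
  have hperm : (List.ofFn k).Perm (List.ofFn l) := by
    rw [List.perm_iff_count]
    intro r
    rw [hcnt k r, hcnt l r]
    exact hcount r
  have hlist : List.ofFn k = List.ofFn l :=
    hperm.eq_of_sortedLE hkmono.sortedLE_ofFn hlmono.sortedLE_ofFn
  have hmn : m = n := by
    have := congrArg List.length hlist
    simpa using this
  subst hmn
  have hkl : k = l := List.ofFn_inj.mp hlist
  subst hkl
  refine ⟨rfl, hsets, fun i => rfl, ?_⟩
  intro hku hlv i
  set r := k i with hr
  set I : Finset (Fin m) := Finset.univ.filter (fun j => k j = r) with hI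
  set S : Finset (Fin q) := I.image u with hS
  have hScard : S.card = I.card := Finset.card_image_of_injective _ hu
  set e := I.orderEmbOfFin (rfl : I.card = I.card) with he
  have hmemI : ∀ t, e t ∈ I := fun t => I.orderEmbOfFin_mem rfl t
  have hkres : ∀ t, k (e t) = r := by
    intro t
    exact (Finset.mem_filter.mp (hmemI t)).2
  have hcoeS : (S : Set (Fin q)) = u '' { j | k j = r } := by
    rw [hS, Finset.coe_image, hI, Finset.coe_filter]
    simp
  have hf : (fun t => u (e t)) = S.orderEmbOfFin hScard := by
    apply Finset.orderEmbOfFin_unique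
    · intro t
      exact Finset.mem_image_of_mem u (hmemI t)
    · intro t t' htt
      exact hku _ _ ((I.orderEmbOfFin rfl).strictMono htt) (by rw [hkres t, hkres t'])
  have hg : (fun t => v (e t)) = S.orderEmbOfFin hScard := by
    apply Finset.orderEmbOfFin_unique
    · intro t
      have : v (e t) ∈ v '' { j | k j = r } := ⟨e t, hkres t, rfl⟩
      rw [← hsets r, ← hcoeS] at this
      exact this
    · intro t t' htt
      exact hlv _ _ ((I.orderEmbOfFin rfl).strictMono htt) (by rw [hkres t, hkres t'])
  have hiI : i ∈ I := Finset.mem_filter.mpr ⟨Finset.mem_univ i, hr.symm⟩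
  have hmem : i ∈ Set.range e := by rw [he, Finset.range_orderEmbOfFin]; exact hiI
  obtain ⟨t, ht⟩ := hmem
  show u i = v i
  rw [← ht, congrFun hf t, congrFun hg t]
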